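/- Let N ≥ 2 be an integer, and for 0 ≤ n ≤ N−2 let a_n, b_n be real numbers and c_n complex numbers satisfying the reflection-symmetry conditions a_n = a_{N−2−n}, b_n = b_{N−2−n}, c_n = c_{N−2−n}. Take g = 1, so ψ^(1) = (e_{(0,1)} − e_{(1,0)})/√2. Define the operator H = Σ_{n=0}^{N−2} T_{n,n+1} on the N-qubit space, where T_{n,n+1} is the two-site embedding of the 4×4 matrix a_n|ψ^(1)⟩⟨ψ^(1)| + b_n|e_{(1,1)}⟩⟨e_{(1,1)}| + c_n|ψ^(1)⟩⟨e_{(1,1)}| + conj(c_n)|e_{(1,1)}⟩⟨ψ^(1)|. Let R be the reflection operator, (R v)(s) = v(s ∘ ρ) with ρ(j) = N−1−j, and let Π be the parity operator, (Π v)(s) = (−1)^{#{j : s(j) = 1}} v(s). Then (Π ∘ R) ∘ H ∘ (Π ∘ R) = H, even though in general R ∘ H ∘ R ≠ H. -/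

import Mathlib

open scoped BigOperators

noncomputable section

/-- The `N`-qubit space: complex functions on configurations `Fin N → Fin 2`. -/
abbrev NQubit (N : ℕ) : Type := (Fin N → Fin 2) → ℂ

/-- The two-qubit basis vector `e_{(a,b)}`. -/
def eBasis (a b : Fin 2) : Fin 2 × Fin 2 → ℂ := Pi.single (a, b) (1 : ℂ)

/-- The two-qubit vector `ψ^(g) = (conj g · e_{(0,1)} − e_{(1,0)}) / √(1+|g|²)`. -/
def psiVec (g : ℂ) : Fin 2 × Fin 2 → ℂ :=
  (Real.sqrt (1 + ‖g‖ ^ 2))⁻¹ •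
    ((starRingEnd ℂ g) • eBasis 0 1 - eBasis 1 0)

/-- The two-qubit basis vector `e_{(1,1)}`. -/
def e11 : Fin 2 × Fin 2 → ℂ := eBasis 1 1

/-- The rank-one matrix `|v⟩⟨w|`, with entries `v p * conj (w q)`. -/
def outer (v w : Fin 2 × Fin 2 → ℂ) : Matrix (Fin 2 × Fin 2) (Fin 2 × Fin 2) ℂ :=
  Matrix.vecMulVec v (star w)

/-- The 4×4 PVBS projector matrix `P^(g) = |e_{(1,1)}⟩⟨e_{(1,1)}| + |ψ^(g)⟩⟨ψ^(g)|`. -/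
def pvbsProj (g : ℂ) : Matrix (Fin 2 × Fin 2) (Fin 2 × Fin 2) ℂ :=
  outer e11 e11 + outer (psiVec g) (psiVec g)

/-- The embedding of a 4×4 matrix `m` as an operator acting on sites `n`, `n'` of the
`N`-qubit chain: `⟨e_s, m_{n,n'} e_t⟩ = m (s n, s n') (t n, t n')` if `s = t` away from
`{n, n'}`, and `0` otherwise. -/
def twoSite (N : ℕ) (m : Matrix (Fin 2 × Fin 2) (Fin 2 × Fin 2) ℂ) (n n' : Fin N) :
    Matrix (Fin N → Fin 2) (Fin N → Fin 2) ℂ :=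
  fun s t =>
    if ∀ j : Fin N, j ≠ n → j ≠ n' → s j = t j then m (s n, s n') (t n, t n') else 0


/-- The local PVBS-deformed interaction
`a|ψ^(g)⟩⟨ψ^(g)| + b|e₁₁⟩⟨e₁₁| + c|ψ^(g)⟩⟨e₁₁| + conj c |e₁₁⟩⟨ψ^(g)|`. -/
def locMat (a b : ℝ) (c g : ℂ) : Matrix (Fin 2 × Fin 2) (Fin 2 × Fin 2) ℂ :=
  (a : ℂ) • outer (psiVec g) (psiVec g) + (b : ℂ) • outer e11 e11 +
    c • outer (psiVec g) e11 + (starRingEnd ℂ c) • outer e11 (psiVec g)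

/-- The PVBS-deformed Hamiltonian `H = ∑_{n=0}^{N-2} T_{n,n+1}` on the `N`-qubit chain. -/
def pvbsHam (N : ℕ) (a b : ℕ → ℝ) (c : ℕ → ℂ) (g : ℂ) :
    Matrix (Fin N → Fin 2) (Fin N → Fin 2) ℂ :=
  ∑ n : Fin (N - 1),
    twoSite N (locMat (a n) (b n) (c n) g)
      ⟨(n : ℕ), by have := n.isLt; omega⟩ ⟨(n : ℕ) + 1, by have := n.isLt; omega⟩

/-- The reflection operator, `(R v)(s) = v (s ∘ ρ)` with `ρ(j) = N−1−j`. -/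
def reflOp (N : ℕ) (v : NQubit N) : NQubit N := fun s => v (fun j => s (Fin.rev j))

/-- The parity operator, `(Π v)(s) = (−1)^{#{j : s j = 1}} v(s)`. -/
def parityOp (N : ℕ) (v : NQubit N) : NQubit N :=
  fun s => (-1 : ℂ) ^ (Finset.univ.filter fun j : Fin N => s j = 1).card * v s

lemma psiVec_one (x : Fin 2 × Fin 2) : psiVec 1 x =
    if x = (0,1) then ((Real.sqrt 2)⁻¹ : ℂ) else if x = (1,0) then -((Real.sqrt 2)⁻¹ : ℂ) else 0 := by
  have h2 : (1 : ℝ) + ‖(1 : ℂ)‖ ^ 2 = 2 := by norm_num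
  fin_cases x <;> simp [psiVec, eBasis, Pi.single_apply, Prod.ext_iff, h2] <;> norm_num

lemma key4 (a b : ℝ) (c : ℂ) (p q r u : Fin 2) :
    ((-1 : ℂ)) ^ ((p : ℕ) + q + r + u) * locMat a b c 1 (q, p) (u, r)
      = locMat a b c 1 (p, q) (r, u) := by
  fin_cases p <;> fin_cases q <;> fin_cases r <;> fin_cases u <;>
    simp [locMat, outer, Matrix.vecMulVec_apply, psiVec_one, e11, eBasis,
      Pi.single_apply, Prod.ext_iff, Matrix.add_apply, Matrix.smul_apply, map_inv₀] <;>
    ring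
lemma fin2_cast (x : Fin 2) : (if x = 1 then 1 else 0 : ℕ) = (x : ℕ) := by fin_cases x <;> rfl

lemma card_filter_eq_sum {N : ℕ} (s : Fin N → Fin 2) :
    (Finset.univ.filter fun j : Fin N => s j = 1).card = ∑ j, (s j : ℕ) := by
  rw [Finset.card_filter]
  exact Finset.sum_congr rfl fun j _ => fin2_cast (s j)

lemma parity_cond {N : ℕ} (s t : Fin N → Fin 2) (n0 n1 : Fin N) (hne : n0 ≠ n1)
    (h : ∀ j, j ≠ n0 → j ≠ n1 → s j = t j) :
    ((-1 : ℂ)) ^ ((Finset.univ.filter fun j => s j = 1).card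
        + (Finset.univ.filter fun j => t j = 1).card)
      = (-1) ^ ((s n0 : ℕ) + (s n1 : ℕ) + (t n0 : ℕ) + (t n1 : ℕ)) := by
  rw [card_filter_eq_sum, card_filter_eq_sum, ← Finset.sum_add_distrib]
  have hsub : ({n0, n1} : Finset (Fin N)) ⊆ Finset.univ := Finset.subset_univ _
  rw [← Finset.sum_sdiff hsub, Finset.sum_pair hne]
  have hE : Even (∑ j ∈ Finset.univ \ {n0, n1}, ((s j : ℕ) + (t j : ℕ))) := by
    apply Finset.even_sum
    intro j hj
    have hj' : j ≠ n0 ∧ j ≠ n1 := by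
      simpa [Finset.mem_sdiff] using hj
    rw [h j hj'.1 hj'.2]
    exact ⟨(t j : ℕ), by ring⟩
  rw [pow_add, hE.neg_one_pow, one_mul]
  congr 1
  ring
lemma cond_refl {N : ℕ} (s t : Fin N → Fin 2) (K0 K1 : Fin N) :
    (∀ j : Fin N, j ≠ K0 → j ≠ K1 → s (Fin.rev j) = t (Fin.rev j)) ↔
      ∀ j : Fin N, j ≠ Fin.rev K0 → j ≠ Fin.rev K1 → s j = t j := by
  constructor
  · intro h j h1 h2
    have := h (Fin.rev j)
      (fun hc => h1 (by rw [← hc, Fin.rev_rev]))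
      (fun hc => h2 (by rw [← hc, Fin.rev_rev]))
    simpa [Fin.rev_rev] using this
  · intro h j h1 h2
    exact h (Fin.rev j) (fun hc => h1 (Fin.rev_injective hc))
      (fun hc => h2 (Fin.rev_injective hc))

lemma twoSite_term_symm {N : ℕ} (a b : ℝ) (c : ℂ) (K0 K1 : Fin N)
    (hne : Fin.rev K1 ≠ Fin.rev K0) (s t : Fin N → Fin 2) :
    ((-1 : ℂ)) ^ ((Finset.univ.filter fun j => s j = 1).card
        + (Finset.univ.filter fun j => t j = 1).card) *
      twoSite N (locMat a b c 1) K0 K1 (fun j => s (Fin.rev j)) (fun j => t (Fin.rev j))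
      = twoSite N (locMat a b c 1) (Fin.rev K1) (Fin.rev K0) s t := by
  unfold twoSite
  by_cases h : ∀ j : Fin N, j ≠ Fin.rev K1 → j ≠ Fin.rev K0 → s j = t j
  · have h' : ∀ j : Fin N, j ≠ K0 → j ≠ K1 → s (Fin.rev j) = t (Fin.rev j) :=
      (cond_refl s t K0 K1).mpr (fun j h1 h2 => h j h2 h1)
    rw [if_pos h', if_pos h, parity_cond s t (Fin.rev K1) (Fin.rev K0) hne h]
    exact key4 a b c (s (Fin.rev K1)) (s (Fin.rev K0)) (t (Fin.rev K1)) (t (Fin.rev K0))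
  · rw [if_neg (fun hc => h (fun j h1 h2 => (cond_refl s t K0 K1).mp hc j h2 h1)),
      if_neg h, mul_zero]


lemma ham_entry (N : ℕ) (hN : 2 ≤ N) (a b : ℕ → ℝ) (c : ℕ → ℂ)
    (hsym : ∀ n ≤ N - 2, a n = a (N - 2 - n) ∧ b n = b (N - 2 - n) ∧ c n = c (N - 2 - n))
    (s t : Fin N → Fin 2) :
    ((-1 : ℂ)) ^ ((Finset.univ.filter fun j => s j = 1).card
        + (Finset.univ.filter fun j => t j = 1).card) *
      pvbsHam N a b c 1 (fun j => s (Fin.rev j)) (fun j => t (Fin.rev j))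
      = pvbsHam N a b c 1 s t := by
  unfold pvbsHam
  rw [Matrix.sum_apply, Matrix.sum_apply, Finset.mul_sum]
  refine Fintype.sum_equiv Fin.revPerm _ _ fun n => ?_
  have hn2 : (n : ℕ) ≤ N - 2 := by have := n.isLt; omega
  have hne : Fin.rev (⟨(n : ℕ) + 1, by omega⟩ : Fin N) ≠ Fin.rev ⟨(n : ℕ), by omega⟩ := by
    simp [Fin.ext_iff, Fin.val_rev]; omega
  have key := twoSite_term_symm (a n) (b n) (c n)
    (⟨(n : ℕ), by omega⟩ : Fin N) ⟨(n : ℕ) + 1, by omega⟩ hne s t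
  have hA : Fin.rev (⟨(n : ℕ) + 1, by omega⟩ : Fin N)
      = (⟨((Fin.revPerm n : Fin (N - 1)) : ℕ), by have := (Fin.revPerm n).isLt; omega⟩ : Fin N) := by
    ext; simp [Fin.val_rev]; omega
  have hB : Fin.rev (⟨(n : ℕ), by omega⟩ : Fin N)
      = (⟨((Fin.revPerm n : Fin (N - 1)) : ℕ) + 1, by have := (Fin.revPerm n).isLt; omega⟩ : Fin N) := by
    ext; simp [Fin.val_rev]; omega
  have hval : ((Fin.revPerm n : Fin (N - 1)) : ℕ) = N - 2 - (n : ℕ) := by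
    simp [Fin.val_rev]; omega
  have ha : a ((Fin.revPerm n : Fin (N - 1)) : ℕ) = a (n : ℕ) := by
    rw [hval]; exact ((hsym (n : ℕ) hn2).1).symm
  have hb : b ((Fin.revPerm n : Fin (N - 1)) : ℕ) = b (n : ℕ) := by
    rw [hval]; exact ((hsym (n : ℕ) hn2).2.1).symm
  have hc : c ((Fin.revPerm n : Fin (N - 1)) : ℕ) = c (n : ℕ) := by
    rw [hval]; exact ((hsym (n : ℕ) hn2).2.2).symm
  rw [ha, hb, hc, ← hA, ← hB]
  exact key

def revConf (N : ℕ) : (Fin N → Fin 2) ≃ (Fin N → Fin 2) :=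
  ⟨fun t j => t (Fin.rev j), fun t j => t (Fin.rev j),
    fun t => by funext j; simp [Fin.rev_rev], fun t => by funext j; simp [Fin.rev_rev]⟩

lemma part1 (N : ℕ) (hN : 2 ≤ N) (a b : ℕ → ℝ) (c : ℕ → ℂ)
    (hsym : ∀ n ≤ N - 2, a n = a (N - 2 - n) ∧ b n = b (N - 2 - n) ∧ c n = c (N - 2 - n))
    (v : NQubit N) :
    parityOp N (reflOp N ((pvbsHam N a b c 1).mulVec (parityOp N (reflOp N v)))) =
      (pvbsHam N a b c 1).mulVec v := by
  funext s
  simp only [parityOp, reflOp, Matrix.mulVec, dotProduct]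
  rw [Finset.mul_sum]
  refine Fintype.sum_equiv (revConf N) _ _ fun u => ?_
  simp only [revConf, Equiv.coe_fn_mk]
  have hcard : (Finset.univ.filter fun j : Fin N => u (Fin.rev j) = 1).card
      = (Finset.univ.filter fun j : Fin N => u j = 1).card := by
    rw [card_filter_eq_sum, card_filter_eq_sum]
    exact Fintype.sum_equiv Fin.revPerm _ _ fun j => rfl
  have hh := ham_entry N hN a b c hsym s (fun j => u (Fin.rev j))
  simp only [Fin.rev_rev] at hh
  rw [hcard] at hh
  rw [← hh]
  ring

lemma part2 : ∃ v : NQubit 2,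
    reflOp 2 ((pvbsHam 2 (fun _ => 0) (fun _ => 0) (fun _ => 1) 1).mulVec (reflOp 2 v)) ≠
      (pvbsHam 2 (fun _ => 0) (fun _ => 0) (fun _ => 1) 1).mulVec v := by
  set t11 : Fin 2 → Fin 2 := fun _ => 1 with ht11
  refine ⟨fun t => if t = t11 then 1 else 0, fun hEq => ?_⟩
  have hrv : ∀ t : Fin 2 → Fin 2, (fun j => t (Fin.rev j)) = t11 ↔ t = t11 := by
    intro t
    constructor <;> intro h <;> funext j
    · have := congrFun h (Fin.rev j)
      simpa [Fin.rev_rev, ht11] using this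
    · rw [h]
  have hentry : ∀ s' : Fin 2 → Fin 2,
      pvbsHam 2 (fun _ => 0) (fun _ => 0) (fun _ => 1) 1 s' t11
        = psiVec 1 (s' 0, s' 1) := by
    intro s'
    have hsum : ∀ f : Fin (2 - 1) → ℂ, ∑ x, f x = f ⟨0, by omega⟩ := fun f =>
      Fin.sum_univ_one f
    rw [pvbsHam, Matrix.sum_apply, hsum]
    simp only [twoSite, Fin.val_mk, Fin.mk_zero, Fin.mk_one, zero_add]
    have hc : ∀ j : Fin 2, j ≠ 0 → j ≠ 1 → s' j = t11 j := by
      intro j h0 h1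
      fin_cases j
      · exact absurd rfl h0
      · exact absurd rfl h1
    rw [if_pos hc]
    simp [ht11, locMat, outer, Matrix.vecMulVec_apply, e11, eBasis, Pi.single_apply,
      psiVec_one]
  have hval := congrFun hEq (fun j : Fin 2 => j)
  simp only [reflOp, Matrix.mulVec, dotProduct, hrv, mul_ite, mul_one, mul_zero,
    Finset.sum_ite_eq', Finset.mem_univ, if_true] at hval
  rw [hentry, hentry] at hval
  have hrev0 : (Fin.rev 0 : Fin 2) = 1 := by decide
  have hrev1 : (Fin.rev 1 : Fin 2) = 0 := by decide
  rw [psiVec_one, psiVec_one] at hval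
  simp only [hrev0, hrev1] at hval
  norm_num at hval
  have h2 : ((Real.sqrt 2 : ℝ) : ℂ) ≠ 0 :=
    Complex.ofReal_ne_zero.mpr (by positivity)
  exact inv_ne_zero h2 (by linear_combination (-1/2 : ℂ) * hval)

/-- Combined parity–reflection symmetry of the PVBS-deformed Hamiltonian at the critical
coupling `g = 1` (supplementary material): for reflection-symmetric coefficients,
`(Π ∘ R) ∘ H ∘ (Π ∘ R) = H` — even though in general `R ∘ H ∘ R ≠ H` at `g = 1`. -/
theorem pvbsHam_parity_reflection_symmetry_one (N : ℕ) (hN : 2 ≤ N)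
    (a b : ℕ → ℝ) (c : ℕ → ℂ)
    (hsym : ∀ n ≤ N - 2, a n = a (N - 2 - n) ∧ b n = b (N - 2 - n) ∧ c n = c (N - 2 - n)) :
    (∀ v : NQubit N,
      parityOp N (reflOp N
          ((pvbsHam N a b c 1).mulVec (parityOp N (reflOp N v)))) =
        (pvbsHam N a b c 1).mulVec v) ∧
    (∃ (N' : ℕ) (_ : 2 ≤ N') (a' b' : ℕ → ℝ) (c' : ℕ → ℂ),
      (∀ n ≤ N' - 2,
        a' n = a' (N' - 2 - n) ∧ b' n = b' (N' - 2 - n) ∧ c' n = c' (N' - 2 - n)) ∧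
      ∃ v : NQubit N',
        reflOp N' ((pvbsHam N' a' b' c' 1).mulVec (reflOp N' v)) ≠
          (pvbsHam N' a' b' c' 1).mulVec v) := by
  refine ⟨fun v => part1 N hN a b c hsym v,
    ⟨2, le_refl 2, fun _ => 0, fun _ => 0, fun _ => 1,
      fun n hn => ⟨rfl, rfl, rfl⟩, part2⟩⟩
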